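/- The scoring rule with scores s_j = −j(j−1)/2 for position j (score differences s_j − s_{j+1} = −j) never ranks a majority loser first: for all k ≥ 2, a majority loser's total over n races is strictly less than −n·k(k−1)/4, which is at most the average total score n(1−k²)/6. -/

import Mathlib

def TotalScore {n k : ℕ} (s : Fin k → ℝ) (P : Fin n → Equiv.Perm (Fin k)) (a : Fin k) : ℝ :=
  ∑ i, s (P i a)

lemma sum_aux (k : ℕ) : ∑ j ∈ Finset.range k, ((j:ℝ) * ((j:ℝ)+1)) = (k:ℝ)*((k:ℝ)^2-1)/3 := by
  induction k with
  | zero => simp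
  | succ m ih => rw [Finset.sum_range_succ, ih]; push_cast; ring

theorem stmt18 (k n : ℕ) (hk : 2 ≤ k) (P : Fin n → Equiv.Perm (Fin k)) (c : Fin k)
    (hml : 2 * (Finset.univ.filter fun i => (P i c : ℕ) = k - 1).card > n) :
    TotalScore (fun j : Fin k => -(((j : ℕ) : ℝ) * (((j : ℕ) : ℝ) + 1)) / 2) P c <
      -((n : ℝ) * (k : ℝ) * ((k : ℝ) - 1)) / 4 ∧
    -((n : ℝ) * (k : ℝ) * ((k : ℝ) - 1)) / 4 ≤ (n : ℝ) * (1 - (k : ℝ) ^ 2) / 6 ∧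
    (∑ a, TotalScore (fun j : Fin k => -(((j : ℕ) : ℝ) * (((j : ℕ) : ℝ) + 1)) / 2) P a)
        / (k : ℝ) = (n : ℝ) * (1 - (k : ℝ) ^ 2) / 6 ∧
    ∃ b : Fin k,
      TotalScore (fun j : Fin k => -(((j : ℕ) : ℝ) * (((j : ℕ) : ℝ) + 1)) / 2) P c <
        TotalScore (fun j : Fin k => -(((j : ℕ) : ℝ) * (((j : ℕ) : ℝ) + 1)) / 2) P b := by
  set s : Fin k → ℝ := fun j : Fin k => -(((j : ℕ) : ℝ) * (((j : ℕ) : ℝ) + 1)) / 2 with hs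
  have hk2 : (2:ℝ) ≤ (k:ℝ) := by exact_mod_cast hk
  have hk1 : (1:ℝ) ≤ (k:ℝ) - 1 := by linarith
  -- part 1
  set F := Finset.univ.filter fun i : Fin n => (P i c : ℕ) = k - 1 with hF
  have hcard : (n:ℝ) < 2 * (F.card : ℝ) := by exact_mod_cast hml
  have h1 : TotalScore s P c < -((n : ℝ) * (k : ℝ) * ((k : ℝ) - 1)) / 4 := by
    have hsplit : TotalScore s P c = ∑ i ∈ F, s (P i c) + ∑ i ∈ Fᶜ, s (P i c) := by
      rw [TotalScore, ← Finset.sum_add_sum_compl F]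
    have hval : ∀ i ∈ F, s (P i c) = -((k:ℝ) * ((k:ℝ)-1)) / 2 := by
      intro i hi
      have hi' : (P i c : ℕ) = k - 1 := by simpa [hF] using hi
      have : ((k - 1 : ℕ) : ℝ) = (k:ℝ) - 1 := by
        have : 1 ≤ k := Nat.le_of_succ_le hk
        push_cast [Nat.cast_sub this]; ring
      simp only [hs, hi', this]; ring
    have hF1 : ∑ i ∈ F, s (P i c) = F.card * (-((k:ℝ) * ((k:ℝ)-1)) / 2) := by
      rw [Finset.sum_congr rfl hval]; simp [mul_comm]
    have hF2 : ∑ i ∈ Fᶜ, s (P i c) ≤ 0 := by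
      apply Finset.sum_nonpos
      intro i _
      simp only [hs]
      have h0 : (0:ℝ) ≤ ((P i c : ℕ) : ℝ) := Nat.cast_nonneg _
      have : (0:ℝ) ≤ ((P i c : ℕ) : ℝ) * (((P i c : ℕ) : ℝ) + 1) := by positivity
      linarith
    have hkk : 0 < (k:ℝ) * ((k:ℝ)-1) := by nlinarith
    have : (F.card : ℝ) * (-((k:ℝ) * ((k:ℝ)-1)) / 2) < -((n : ℝ) * (k : ℝ) * ((k : ℝ) - 1)) / 4 := by
      nlinarith
    linarith [hsplit, hF1 ▸ le_refl (∑ i ∈ F, s (P i c))]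
  refine ⟨h1, ?_, ?_, ?_⟩
  · have hn : (0:ℝ) ≤ n := Nat.cast_nonneg n
    nlinarith [mul_nonneg (mul_nonneg hn (by linarith : (0:ℝ) ≤ (k:ℝ)-1)) (by linarith : (0:ℝ) ≤ (k:ℝ)-2)]
  · -- average
    have hswap : ∑ a, TotalScore s P a = ∑ i : Fin n, ∑ a, s (P i a) := by
      rw [Finset.sum_comm]; rfl
    have hperm : ∀ i : Fin n, ∑ a, s (P i a) = ∑ j, s j := fun i =>
      Fintype.sum_equiv (P i) _ _ (fun a => rfl)
    have hsum : ∑ j, s j = (k:ℝ) * (1 - (k:ℝ)^2) / 6 := by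
      rw [Fin.sum_univ_eq_sum_range (fun j => -((j:ℝ) * ((j:ℝ)+1)) / 2)]
      simp_rw [show ∀ x:ℝ, -(x * (x+1))/2 = (-(1/2)) * (x*(x+1)) from fun x => by ring]
      rw [← Finset.mul_sum, sum_aux]
      ring
    rw [hswap, Finset.sum_congr rfl (fun i _ => hperm i), Finset.sum_const, Finset.card_univ,
      Fintype.card_fin, nsmul_eq_mul, hsum]
    have hk0 : (k:ℝ) ≠ 0 := by positivity
    field_simp
  · -- exists better
    have havg : -((n : ℝ) * (k : ℝ) * ((k : ℝ) - 1)) / 4 ≤ (n : ℝ) * (1 - (k : ℝ) ^ 2) / 6 := by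
      have hn : (0:ℝ) ≤ n := Nat.cast_nonneg n
      nlinarith [mul_nonneg (mul_nonneg hn (by linarith : (0:ℝ) ≤ (k:ℝ)-1)) (by linarith : (0:ℝ) ≤ (k:ℝ)-2)]
    have hswap : ∑ a, TotalScore s P a = (k:ℝ) * ((n : ℝ) * (1 - (k : ℝ) ^ 2) / 6) := by
      have hswap : ∑ a, TotalScore s P a = ∑ i : Fin n, ∑ a, s (P i a) := by
        rw [Finset.sum_comm]; rfl
      have hperm : ∀ i : Fin n, ∑ a, s (P i a) = ∑ j, s j := fun i =>
        Fintype.sum_equiv (P i) _ _ (fun a => rfl)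
      have hsum : ∑ j, s j = (k:ℝ) * (1 - (k:ℝ)^2) / 6 := by
        rw [Fin.sum_univ_eq_sum_range (fun j => -((j:ℝ) * ((j:ℝ)+1)) / 2)]
        simp_rw [show ∀ x:ℝ, -(x * (x+1))/2 = (-(1/2)) * (x*(x+1)) from fun x => by ring]
        rw [← Finset.mul_sum, sum_aux]
        ring
      rw [hswap, Finset.sum_congr rfl (fun i _ => hperm i), Finset.sum_const, Finset.card_univ,
        Fintype.card_fin, nsmul_eq_mul, hsum]
      ring
    have hlt : ∑ a : Fin k, TotalScore s P c < ∑ a, TotalScore s P a := by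
      rw [hswap, Finset.sum_const, Finset.card_univ, Fintype.card_fin, nsmul_eq_mul]
      have hkpos : (0:ℝ) < k := by positivity
      have : TotalScore s P c < (n : ℝ) * (1 - (k : ℝ) ^ 2) / 6 := lt_of_lt_of_le h1 havg
      nlinarith
    obtain ⟨b, _, hb⟩ := Finset.exists_lt_of_sum_lt hlt
    exact ⟨b, hb⟩
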